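/- arXiv:1911.07313 — 3 statements merged into one kernel-verified Lean document; each statement's English description precedes it below -/
import Mathlib

section
/- The function f is continuous on [0,∞) and admits the representation f(z) = E[W⁺ 1{T = 0}] + ∫₀^z d(ξ) dξ for every z ≥ 0. If moreover P(T = 0) > 0 and W⁺ is almost surely bounded below by some constant w₀ > 0, then f has a strictly positive root ẑ ∈ (0,∞). -/
open MeasureTheory Filter Set Topology

open Classical in
/-- `psi1 l x = P(Poi(x) ≥ l)` for `l ∈ ℕ₀`, and `psi1 ⊤ x = 0`. -/
noncomputable def psi1 (l : WithTop ℕ) (x : ℝ) : ℝ :=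
  ∑' j : ℕ, if l ≤ (j : WithTop ℕ) then Real.exp (-x) * x ^ j / (Nat.factorial j : ℝ) else 0

open Classical in
/-- `phi1 l x = P(Poi(x) = l - 1)` for integer `l ≥ 1`, and `0` for `l ∈ {0, ∞}`. -/
noncomputable def phi1 (l : WithTop ℕ) (x : ℝ) : ℝ :=
  ∑' j : ℕ, if (j : WithTop ℕ) + 1 = l then Real.exp (-x) * x ^ j / (Nat.factorial j : ℝ) else 0

/-- `f z = E[W⁺ ψ_T(W⁻ z)] - z`. -/
noncomputable def fCont {Ω : Type*} [MeasureSpace Ω] (Wm Wp : Ω → ℝ) (T : Ω → WithTop ℕ)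
    (z : ℝ) : ℝ :=
  (∫ ω, Wp ω * psi1 (T ω) (Wm ω * z)) - z

/-- `d z = E[W⁻ W⁺ φ_T(W⁻ z)] - 1`. -/
noncomputable def dCont {Ω : Type*} [MeasureSpace Ω] (Wm Wp : Ω → ℝ) (T : Ω → WithTop ℕ)
    (z : ℝ) : ℝ :=
  (∫ ω, Wm ω * Wp ω * phi1 (T ω) (Wm ω * z)) - 1

open scoped Nat

lemma summable_poisson (x : ℝ) : Summable (fun j : ℕ => Real.exp (-x) * x ^ j / (j ! : ℝ)) := by
  have := (Real.summable_pow_div_factorial x).mul_left (Real.exp (-x))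
  refine this.congr fun j => ?_
  rw [mul_div_assoc]

lemma tsum_poisson (x : ℝ) : ∑' j : ℕ, Real.exp (-x) * x ^ j / (j ! : ℝ) = 1 := by
  have h : ∑' j : ℕ, (x ^ j / (j ! : ℝ)) = Real.exp x := by
    rw [Real.exp_eq_exp_ℝ, NormedSpace.exp_eq_tsum_div]
  calc ∑' j : ℕ, Real.exp (-x) * x ^ j / (j ! : ℝ)
      = Real.exp (-x) * ∑' j : ℕ, (x ^ j / (j ! : ℝ)) := by
        rw [← tsum_mul_left]; exact tsum_congr fun j => (mul_div_assoc _ _ _)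
    _ = 1 := by rw [h, ← Real.exp_add]; simp

lemma psi1_top (x : ℝ) : psi1 ⊤ x = 0 := by
  unfold psi1
  convert tsum_zero with j
  simp

open Classical in
lemma psi1_coe (l : ℕ) (x : ℝ) :
    psi1 (l : WithTop ℕ) x = 1 - Real.exp (-x) * ∑ j ∈ Finset.range l, x ^ j / (j ! : ℝ) := by
  unfold psi1
  have hs := summable_poisson x
  have h1 : ∀ j : ℕ, (if (l : WithTop ℕ) ≤ (j : WithTop ℕ) then Real.exp (-x) * x ^ j / (j ! : ℝ) else 0)
      = Real.exp (-x) * x ^ j / (j ! : ℝ) - (if j < l then Real.exp (-x) * x ^ j / (j ! : ℝ) else 0) := by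
    intro j
    simp only [Nat.cast_le]
    by_cases h : l ≤ j
    · simp [h, Nat.not_lt.mpr h]
    · simp [h, Nat.lt_of_not_le h]
  have hs2 : Summable (fun j : ℕ => if j < l then Real.exp (-x) * x ^ j / (j ! : ℝ) else 0) := by
    apply summable_of_finite_support
    apply Set.Finite.subset (Set.finite_Iio l)
    intro j hj
    simp only [Function.mem_support] at hj
    by_contra h
    simp only [Set.mem_Iio, not_lt] at h
    exact hj (by simp [Nat.not_lt.mpr h])
  calc (∑' j : ℕ, if (l : WithTop ℕ) ≤ (j : WithTop ℕ) then Real.exp (-x) * x ^ j / (j ! : ℝ) else 0)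
      = ∑' j : ℕ, (Real.exp (-x) * x ^ j / (j ! : ℝ) - (if j < l then Real.exp (-x) * x ^ j / (j ! : ℝ) else 0)) := tsum_congr h1
    _ = 1 - Real.exp (-x) * ∑ j ∈ Finset.range l, x ^ j / (j ! : ℝ) := by
        rw [Summable.tsum_sub hs hs2, tsum_poisson]
        congr 1
        rw [tsum_eq_sum (s := Finset.range l) (by intro j hj; simp at hj; simp [hj]),
          Finset.mul_sum]
        exact Finset.sum_congr rfl fun j hj => by
          simp at hj; simp [hj, mul_div_assoc]

lemma phi1_top (x : ℝ) : phi1 ⊤ x = 0 := by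
  unfold phi1
  convert tsum_zero with j
  simp

lemma phi1_zero (x : ℝ) : phi1 0 x = 0 := by
  unfold phi1
  convert tsum_zero with j
  simp

lemma phi1_coe_succ (l : ℕ) (x : ℝ) :
    phi1 ((l : WithTop ℕ) + 1) x = Real.exp (-x) * x ^ l / (l ! : ℝ) := by
  unfold phi1
  rw [tsum_eq_single l]
  · simp
  · intro j hj
    have : ((j : WithTop ℕ) + 1) ≠ ((l : WithTop ℕ) + 1) := by
      simp only [ne_eq]
      intro h
      exact hj (Nat.succ_injective (by exact_mod_cast h))
    simp [this]

lemma hasDerivAt_S (l : ℕ) (x : ℝ) :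
    HasDerivAt (fun x : ℝ => ∑ j ∈ Finset.range l, x ^ j / (j ! : ℝ))
      (∑ j ∈ Finset.range (l - 1), x ^ j / (j ! : ℝ)) x := by
  have H : HasDerivAt (fun x : ℝ => ∑ j ∈ Finset.range l, x ^ j / (j ! : ℝ))
      (∑ j ∈ Finset.range l, (j * x ^ (j - 1)) / (j ! : ℝ)) x := by
    apply HasDerivAt.fun_sum
    intro j _
    exact (hasDerivAt_pow j x).div_const _
  convert H using 1
  cases l with
  | zero => simp
  | succ n =>
    rw [Finset.sum_range_succ' (fun j => ((j : ℝ) * x ^ (j - 1)) / (j ! : ℝ)) n]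
    simp only [Nat.succ_sub_one, Nat.cast_zero, zero_mul, Nat.factorial_zero, Nat.cast_one,
      zero_div, add_zero]
    refine Finset.sum_congr rfl fun j _ => ?_
    rw [Nat.factorial_succ]
    push_cast
    have h1 : ((j : ℝ) + 1) ≠ 0 := by positivity
    have h2 : ((j ! : ℝ)) ≠ 0 := by exact_mod_cast j.factorial_ne_zero
    field_simp

lemma phi1_coe (l : ℕ) (x : ℝ) :
    phi1 (l : WithTop ℕ) x =
      if l = 0 then 0 else Real.exp (-x) * x ^ (l - 1) / ((l - 1)! : ℝ) := by
  cases l with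
  | zero => simpa using phi1_zero x
  | succ n =>
    have : ((n + 1 : ℕ) : WithTop ℕ) = (n : WithTop ℕ) + 1 := by push_cast; ring
    rw [this, phi1_coe_succ]
    simp

lemma hasDerivAt_psi1 (l : WithTop ℕ) (x : ℝ) :
    HasDerivAt (psi1 l) (phi1 l x) x := by
  induction l using WithTop.recTopCoe with
  | top =>
    have h1 : psi1 ⊤ = fun _ : ℝ => (0 : ℝ) := funext psi1_top
    rw [h1, phi1_top]
    exact hasDerivAt_const x 0
  | coe l =>
    show HasDerivAt (psi1 ((l : ℕ) : WithTop ℕ)) (phi1 ((l : ℕ) : WithTop ℕ) x) x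
    have h1 : psi1 ((l : ℕ) : WithTop ℕ) =
        fun x : ℝ => 1 - Real.exp (-x) * ∑ j ∈ Finset.range l, x ^ j / (j ! : ℝ) :=
      funext (psi1_coe l)
    rw [h1]
    have hexp : HasDerivAt (fun x : ℝ => Real.exp (-x)) (-Real.exp (-x)) x := by
      simpa [Function.comp_def] using (Real.hasDerivAt_exp (-x)).comp x (hasDerivAt_neg x)
    have H : HasDerivAt (fun x : ℝ => 1 - Real.exp (-x) * ∑ j ∈ Finset.range l, x ^ j / (j ! : ℝ)) _ x :=
      ((hexp.fun_mul (hasDerivAt_S l x)).const_sub 1)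
    convert H using 1
    rw [phi1_coe]
    cases l with
    | zero => simp
    | succ n =>
      simp only [Nat.succ_ne_zero, if_false, Nat.succ_sub_one]
      rw [Finset.sum_range_succ]
      ring

lemma continuous_phi1 (l : WithTop ℕ) : Continuous (phi1 l) := by
  induction l using WithTop.recTopCoe with
  | top =>
    have h1 : phi1 ⊤ = fun _ : ℝ => (0 : ℝ) := funext phi1_top
    rw [h1]; exact continuous_const
  | coe l =>
    show Continuous (phi1 ((l : ℕ) : WithTop ℕ))
    have h1 : phi1 ((l : ℕ) : WithTop ℕ) = fun x : ℝ =>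
        if l = 0 then 0 else Real.exp (-x) * x ^ (l - 1) / ((l - 1)! : ℝ) := funext (phi1_coe l)
    rw [h1]
    by_cases hl : l = 0
    · simp only [hl, if_true]; exact continuous_const
    · simp only [hl, if_false]
      exact ((Real.continuous_exp.comp continuous_neg).mul (continuous_pow _)).div_const _

lemma psi1_nonneg (l : WithTop ℕ) {x : ℝ} (hx : 0 ≤ x) : 0 ≤ psi1 l x := by
  classical
  apply tsum_nonneg
  intro j
  split
  · positivity
  · exact le_rfl

lemma summable_psi1_terms (l : WithTop ℕ) (x : ℝ) :
    Summable (fun j : ℕ => if l ≤ (j : WithTop ℕ) then Real.exp (-x) * x ^ j / (j ! : ℝ) else 0) := by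
  classical
  apply Summable.of_norm
  apply Summable.of_nonneg_of_le (fun j => norm_nonneg _)
    (fun j => ?_) (summable_poisson x).norm
  rw [Real.norm_eq_abs, Real.norm_eq_abs]
  split
  · exact le_rfl
  · simpa using abs_nonneg _

lemma psi1_le_one (l : WithTop ℕ) {x : ℝ} (hx : 0 ≤ x) : psi1 l x ≤ 1 := by
  classical
  rw [← tsum_poisson x]
  apply Summable.tsum_le_tsum _ (summable_psi1_terms l x) (summable_poisson x)
  intro j
  split
  · exact le_rfl
  · positivity

lemma phi1_nonneg (l : WithTop ℕ) {x : ℝ} (hx : 0 ≤ x) : 0 ≤ phi1 l x := by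
  classical
  apply tsum_nonneg
  intro j
  split
  · positivity
  · exact le_rfl

lemma psi1_zero_eval (l : WithTop ℕ) : psi1 l 0 = if l = 0 then 1 else 0 := by
  induction l using WithTop.recTopCoe with
  | top => simp [psi1_top]
  | coe l =>
    show psi1 ((l : ℕ) : WithTop ℕ) 0 = if ((l : ℕ) : WithTop ℕ) = 0 then 1 else 0
    rw [psi1_coe]
    cases l with
    | zero => simp
    | succ n =>
      have h0 : ((n + 1 : ℕ) : WithTop ℕ) ≠ 0 := by exact_mod_cast Nat.succ_ne_zero n
      simp only [h0, if_false]
      rw [Finset.sum_eq_single 0]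
      · simp
      · intro j _ hj; simp [zero_pow hj]
      · intro h; simp at h

lemma psi1_ftc (l : WithTop ℕ) (a z : ℝ) :
    ∫ ξ in (0:ℝ)..z, a * phi1 l (a * ξ) = psi1 l (a * z) - psi1 l 0 := by
  have hderiv : ∀ ξ ∈ Set.uIcc (0:ℝ) z,
      HasDerivAt (fun t : ℝ => psi1 l (a * t)) (a * phi1 l (a * ξ)) ξ := by
    intro ξ _
    have h1 : HasDerivAt (fun t : ℝ => a * t) a ξ := by
      simpa using (hasDerivAt_id ξ).const_mul a
    have := (hasDerivAt_psi1 l (a * ξ)).comp ξ h1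
    simpa [mul_comm, Function.comp_def] using this
  have hint : IntervalIntegrable (fun ξ => a * phi1 l (a * ξ)) volume 0 z := by
    exact (continuous_const.mul ((continuous_phi1 l).comp (continuous_const.mul continuous_id))).intervalIntegrable 0 z
  simpa [mul_zero] using intervalIntegral.integral_eq_sub_of_hasDerivAt hderiv hint

lemma continuous_psi1 (l : WithTop ℕ) : Continuous (psi1 l) :=
  continuous_iff_continuousAt.mpr fun x => (hasDerivAt_psi1 l x).continuousAt

lemma measurable_comp_T {α : Type*} [MeasurableSpace α] {T : α → WithTop ℕ}
    (hT : ∀ l : WithTop ℕ, MeasurableSet {a | T a = l}) (g : WithTop ℕ → α → ℝ)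
    (hg : ∀ l, Measurable (g l)) : Measurable (fun a => g (T a) a) := by
  intro s hs
  have hset : (fun a => g (T a) a) ⁻¹' s = ⋃ l : WithTop ℕ, ({a | T a = l} ∩ g l ⁻¹' s) := by
    ext a
    simp only [Set.mem_preimage, Set.mem_iUnion, Set.mem_inter_iff, Set.mem_setOf_eq]
    constructor
    · intro hgs; exact ⟨T a, rfl, hgs⟩
    · rintro ⟨l, hl, hgs⟩; subst hl; exact hgs
  rw [hset]
  exact MeasurableSet.iUnion fun l => (hT l).inter (hg l hs)


/-- `f` is continuous on `[0,∞)`, admits the representation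
`f(z) = E[W⁺ 1{T = 0}] + ∫₀^z d(ξ) dξ`, and -- provided `P(T = 0) > 0` and `W⁺` is a.s. bounded
below by a constant `w₀ > 0` -- has a strictly positive root. -/
theorem stmt_0 {Ω : Type*} [MeasureSpace Ω] [IsProbabilityMeasure (volume : Measure Ω)]
    (Wm Wp : Ω → ℝ) (T : Ω → WithTop ℕ)
    (hWm_nonneg : ∀ ω, 0 ≤ Wm ω) (hWp_nonneg : ∀ ω, 0 ≤ Wp ω)
    (hWm_meas : Measurable Wm) (hWp_meas : Measurable Wp)
    (hT_meas : ∀ l : WithTop ℕ, MeasurableSet {ω | T ω = l})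
    (hWm_int : Integrable Wm) (hWp_int : Integrable Wp) :
    ContinuousOn (fCont Wm Wp T) (Set.Ici 0) ∧
    (∀ z : ℝ, 0 ≤ z →
      fCont Wm Wp T z =
        (∫ ω, if T ω = 0 then Wp ω else 0) + ∫ ξ in (0:ℝ)..z, dCont Wm Wp T ξ) ∧
    (0 < volume {ω | T ω = 0} →
      ∀ w₀ : ℝ, 0 < w₀ → (∀ᵐ ω ∂(volume : Measure Ω), w₀ ≤ Wp ω) →
        ∃ zhat : ℝ, 0 < zhat ∧ fCont Wm Wp T zhat = 0) := by
  classical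
  set μ : Measure Ω := volume with hμ
  -- integrability of the ψ-integrand for any z ≥ 0
  have hmeas_psi : ∀ z : ℝ, Measurable (fun ω => Wp ω * psi1 (T ω) (Wm ω * z)) := by
    intro z
    exact measurable_comp_T hT_meas (fun l ω => Wp ω * psi1 l (Wm ω * z))
      (fun l => hWp_meas.mul ((continuous_psi1 l).measurable.comp (hWm_meas.mul_const z)))
  have hint_psi : ∀ z : ℝ, 0 ≤ z → Integrable (fun ω => Wp ω * psi1 (T ω) (Wm ω * z)) μ := by
    intro z hz
    refine hWp_int.mono (hmeas_psi z).aestronglyMeasurable (ae_of_all _ fun ω => ?_)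
    rw [Real.norm_eq_abs, Real.norm_eq_abs]
    have h0 : 0 ≤ Wm ω * z := mul_nonneg (hWm_nonneg ω) hz
    rw [abs_of_nonneg (mul_nonneg (hWp_nonneg ω) (psi1_nonneg _ h0)),
      abs_of_nonneg (hWp_nonneg ω)]
    calc Wp ω * psi1 (T ω) (Wm ω * z) ≤ Wp ω * 1 :=
          mul_le_mul_of_nonneg_left (psi1_le_one _ h0) (hWp_nonneg ω)
      _ = Wp ω := mul_one _
  -- integrability of the indicator term
  have hI0 : Integrable (fun ω => if T ω = 0 then Wp ω else 0) μ := by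
    refine hWp_int.mono (Measurable.aestronglyMeasurable ?_) (ae_of_all _ fun ω => ?_)
    · exact Measurable.ite (hT_meas 0) hWp_meas measurable_const
    · rw [Real.norm_eq_abs, Real.norm_eq_abs]
      split
      · exact le_rfl
      · simpa using abs_nonneg _
  -- the key representation together with interval integrability
  have key : ∀ z : ℝ, 0 ≤ z →
      fCont Wm Wp T z =
        (∫ ω, if T ω = 0 then Wp ω else 0) + (∫ ξ in (0:ℝ)..z, dCont Wm Wp T ξ) ∧
      IntervalIntegrable (dCont Wm Wp T) volume 0 z := by
    intro z hz
    set ν : Measure ℝ := volume.restrict (Set.Ioc 0 z) with hν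
    -- product measurability
    have hHmeas : Measurable (fun p : Ω × ℝ => Wm p.1 * Wp p.1 * phi1 (T p.1) (Wm p.1 * p.2)) := by
      refine measurable_comp_T (T := fun p : Ω × ℝ => T p.1)
        (fun l => ?_) (fun l p => Wm p.1 * Wp p.1 * phi1 l (Wm p.1 * p.2)) (fun l => ?_)
      · exact measurable_fst (hT_meas l)
      · exact ((hWm_meas.comp measurable_fst).mul (hWp_meas.comp measurable_fst)).mul
          ((continuous_phi1 l).measurable.comp ((hWm_meas.comp measurable_fst).mul measurable_snd))
    -- pointwise section computation
    have hcomp : ∀ ω, (∫ ξ in Set.Ioc (0:ℝ) z, Wm ω * Wp ω * phi1 (T ω) (Wm ω * ξ)) =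
        Wp ω * (psi1 (T ω) (Wm ω * z) - psi1 (T ω) 0) := by
      intro ω
      have h1 : (∫ ξ in Set.Ioc (0:ℝ) z, Wm ω * Wp ω * phi1 (T ω) (Wm ω * ξ)) =
          ∫ ξ in (0:ℝ)..z, Wp ω * (Wm ω * phi1 (T ω) (Wm ω * ξ)) := by
        rw [intervalIntegral.integral_of_le hz]
        exact setIntegral_congr_fun measurableSet_Ioc (fun ξ _ => by ring)
      rw [h1, intervalIntegral.integral_const_mul, psi1_ftc]
    have hsec_nonneg : ∀ ω, ∀ ξ ∈ Set.Ioc (0:ℝ) z,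
        0 ≤ Wm ω * Wp ω * phi1 (T ω) (Wm ω * ξ) := fun ω ξ hξ =>
      mul_nonneg (mul_nonneg (hWm_nonneg ω) (hWp_nonneg ω))
        (phi1_nonneg _ (mul_nonneg (hWm_nonneg ω) hξ.1.le))
    -- product integrability
    have hH_int : Integrable (fun p : Ω × ℝ => Wm p.1 * Wp p.1 * phi1 (T p.1) (Wm p.1 * p.2))
        (μ.prod ν) := by
      rw [integrable_prod_iff hHmeas.aestronglyMeasurable]
      constructor
      · refine ae_of_all _ fun ω => ?_
        have hc : Continuous (fun ξ : ℝ => Wm ω * Wp ω * phi1 (T ω) (Wm ω * ξ)) :=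
          continuous_const.mul ((continuous_phi1 (T ω)).comp (continuous_const.mul continuous_id))
        exact hc.integrableOn_Ioc
      · have hnormeq : ∀ ω, (∫ ξ, ‖Wm ω * Wp ω * phi1 (T ω) (Wm ω * ξ)‖ ∂ν) =
            Wp ω * (psi1 (T ω) (Wm ω * z) - psi1 (T ω) 0) := by
          intro ω
          rw [hν, ← hcomp ω]
          exact setIntegral_congr_fun measurableSet_Ioc
            (fun ξ hξ => Real.norm_of_nonneg (hsec_nonneg ω ξ hξ))
        refine hWp_int.mono ?_ (ae_of_all _ fun ω => ?_)
        · exact (hHmeas.aestronglyMeasurable.norm.integral_prod_right')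
        · rw [hnormeq ω, Real.norm_eq_abs, Real.norm_eq_abs]
          have h0z : 0 ≤ Wm ω * z := mul_nonneg (hWm_nonneg ω) hz
          have hd0 : (0:ℝ) ≤ psi1 (T ω) (Wm ω * z) - psi1 (T ω) 0 ∨ True := Or.inr trivial
          have hub : psi1 (T ω) (Wm ω * z) - psi1 (T ω) 0 ≤ 1 := by
            have := psi1_le_one (T ω) h0z
            have := psi1_nonneg (T ω) (le_refl (0:ℝ))
            linarith
          have hlb : 0 ≤ Wp ω * (psi1 (T ω) (Wm ω * z) - psi1 (T ω) 0) := by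
            rw [← hnormeq ω]
            exact integral_nonneg fun ξ => norm_nonneg _
          rw [abs_of_nonneg hlb, abs_of_nonneg (hWp_nonneg ω)]
          nlinarith [hWp_nonneg ω]
    -- marginal integrabilities
    have hJ1 : Integrable (fun ω => ∫ ξ, Wm ω * Wp ω * phi1 (T ω) (Wm ω * ξ) ∂ν) μ :=
      hH_int.integral_prod_left
    have hJ2 : Integrable (fun ξ => ∫ ω, Wm ω * Wp ω * phi1 (T ω) (Wm ω * ξ) ∂μ) ν :=
      hH_int.integral_prod_right
    have hdint : Integrable (dCont Wm Wp T) ν := by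
      have : dCont Wm Wp T = fun ξ =>
          (∫ ω, Wm ω * Wp ω * phi1 (T ω) (Wm ω * ξ) ∂μ) - 1 := rfl
      rw [this]
      exact hJ2.sub (integrable_const 1)
    have hII : IntervalIntegrable (dCont Wm Wp T) volume 0 z := by
      rw [intervalIntegrable_iff_integrableOn_Ioc_of_le hz]
      exact hdint
    refine ⟨?_, hII⟩
    -- pointwise decomposition of the ψ-integrand
    have hpt : ∀ ω, Wp ω * psi1 (T ω) (Wm ω * z) =
        (if T ω = 0 then Wp ω else 0) + ∫ ξ, Wm ω * Wp ω * phi1 (T ω) (Wm ω * ξ) ∂ν := by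
      intro ω
      rw [hcomp ω, psi1_zero_eval]
      split
      · ring
      · ring
    -- Fubini
    have hswap := MeasureTheory.integral_integral_swap
      (f := fun ω ξ => Wm ω * Wp ω * phi1 (T ω) (Wm ω * ξ)) (μ := μ) (ν := ν) hH_int
    have hstep1 : (∫ ω, Wp ω * psi1 (T ω) (Wm ω * z) ∂μ) =
        (∫ ω, if T ω = 0 then Wp ω else 0 ∂μ) +
          ∫ ξ, (∫ ω, Wm ω * Wp ω * phi1 (T ω) (Wm ω * ξ) ∂μ) ∂ν := by
      rw [← hswap, ← integral_add hI0 hJ1]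
      exact integral_congr_ae (ae_of_all _ hpt)
    have hstep2 : (∫ ξ, (∫ ω, Wm ω * Wp ω * phi1 (T ω) (Wm ω * ξ) ∂μ) ∂ν) =
        (∫ ξ in (0:ℝ)..z, dCont Wm Wp T ξ) + z := by
      have h1 : (fun ξ => ∫ ω, Wm ω * Wp ω * phi1 (T ω) (Wm ω * ξ) ∂μ) =
          fun ξ => dCont Wm Wp T ξ + 1 := by
        funext ξ
        simp only [dCont]
        ring
      rw [h1, integral_add hdint (integrable_const 1)]
      have hmeasIoc : ν Set.univ = ENNReal.ofReal z := by
        rw [hν, Measure.restrict_apply_univ, Real.volume_Ioc, sub_zero]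
      rw [intervalIntegral.integral_of_le hz]
      simp only [integral_const, smul_eq_mul, mul_one]
      rw [measureReal_def, hmeasIoc, ENNReal.toReal_ofReal hz]
    show fCont Wm Wp T z = _
    rw [fCont]
    rw [show (∫ ω, Wp ω * psi1 (T ω) (Wm ω * z)) = ∫ ω, Wp ω * psi1 (T ω) (Wm ω * z) ∂μ from rfl,
      hstep1, hstep2]
    ring
  -- continuity on [0, ∞)
  have hcontIci : ContinuousOn (fCont Wm Wp T) (Set.Ici 0) := by
    intro z₀ hz₀
    have hz₀' : (0:ℝ) ≤ z₀ := hz₀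
    set b : ℝ := z₀ + 1 with hb
    have hzb : (0:ℝ) ≤ b := by linarith
    have hII := (key b hzb).2
    have hprim : ContinuousOn (fun u => (∫ ω, if T ω = 0 then Wp ω else 0) +
        ∫ ξ in (0:ℝ)..u, dCont Wm Wp T ξ) (Set.uIcc 0 b) :=
      continuousOn_const.add
        (intervalIntegral.continuousOn_primitive_interval' hII Set.left_mem_uIcc)
    have huIcc : Set.uIcc (0:ℝ) b = Set.Icc 0 b := Set.uIcc_of_le hzb
    rw [huIcc] at hprim
    have hmem : z₀ ∈ Set.Icc (0:ℝ) b := ⟨hz₀', by linarith⟩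
    have h1 : ContinuousWithinAt (fun u => (∫ ω, if T ω = 0 then Wp ω else 0) +
        ∫ ξ in (0:ℝ)..u, dCont Wm Wp T ξ) (Set.Icc 0 b) z₀ := hprim z₀ hmem
    have hnhds : Set.Icc (0:ℝ) b ∈ nhdsWithin z₀ (Set.Ici 0) := by
      refine Filter.mem_of_superset (Filter.inter_mem self_mem_nhdsWithin
        (mem_nhdsWithin_of_mem_nhds (Iio_mem_nhds (by linarith : z₀ < b)))) ?_
      rintro x ⟨hx1, hx2⟩
      exact ⟨hx1, le_of_lt hx2⟩
    have h2 : ContinuousWithinAt (fun u => (∫ ω, if T ω = 0 then Wp ω else 0) +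
        ∫ ξ in (0:ℝ)..u, dCont Wm Wp T ξ) (Set.Ici 0) z₀ := h1.mono_of_mem_nhdsWithin hnhds
    refine h2.congr (fun x hx => (key x hx).1) ((key z₀ hz₀').1)
  refine ⟨hcontIci, fun z hz => (key z hz).1, ?_⟩
  -- root existence
  intro hT0 w₀ hw₀ hwle
  set c : ℝ := ∫ ω, if T ω = 0 then Wp ω else 0 with hc
  have hc_pos : 0 < c := by
    have hgeq : (fun ω => if T ω = 0 then w₀ else 0) =
        Set.indicator {ω | T ω = 0} (fun _ => w₀) := by
      funext ω
      rw [Set.indicator_apply]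
      rfl
    have hgint : Integrable (fun ω => if T ω = 0 then w₀ else 0) μ := by
      rw [hgeq]
      exact (integrable_const w₀).indicator (hT_meas 0)
    have hgval : (∫ ω, if T ω = 0 then w₀ else 0 ∂μ) = (μ {ω | T ω = 0}).toReal * w₀ := by
      rw [hgeq, integral_indicator (hT_meas 0), setIntegral_const, smul_eq_mul, measureReal_def]
    have hmono : (∫ ω, if T ω = 0 then w₀ else 0 ∂μ) ≤ c := by
      refine integral_mono_ae hgint hI0 ?_
      filter_upwards [hwle] with ω hω
      split
      · exact hω
      · exact le_rfl
    have htop : μ {ω | T ω = 0} ≠ ⊤ := measure_ne_top μ _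
    have hpos : 0 < (μ {ω | T ω = 0}).toReal := ENNReal.toReal_pos (ne_of_gt hT0) htop
    calc (0:ℝ) < (μ {ω | T ω = 0}).toReal * w₀ := mul_pos hpos hw₀
      _ ≤ c := hgval ▸ hmono
  have hf0 : fCont Wm Wp T 0 = c := by
    have := (key 0 le_rfl).1
    rwa [intervalIntegral.integral_same, add_zero] at this
  set zs : ℝ := max (∫ ω, Wp ω) 0 + 1 with hzs
  have hzs_pos : 0 < zs := by
    have : (0:ℝ) ≤ max (∫ ω, Wp ω) 0 := le_max_right _ _
    linarith
  have hfzs : fCont Wm Wp T zs < 0 := by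
    have hbound : (∫ ω, Wp ω * psi1 (T ω) (Wm ω * zs)) ≤ ∫ ω, Wp ω := by
      refine integral_mono (hint_psi zs hzs_pos.le) hWp_int fun ω => ?_
      have h0 : 0 ≤ Wm ω * zs := mul_nonneg (hWm_nonneg ω) hzs_pos.le
      calc Wp ω * psi1 (T ω) (Wm ω * zs) ≤ Wp ω * 1 :=
            mul_le_mul_of_nonneg_left (psi1_le_one _ h0) (hWp_nonneg ω)
        _ = Wp ω := mul_one _
    have : fCont Wm Wp T zs ≤ (∫ ω, Wp ω) - zs := by
      rw [fCont]; linarith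
    have hle : (∫ ω, Wp ω) ≤ max (∫ ω, Wp ω) 0 := le_max_left _ _
    linarith
  have hcont' : ContinuousOn (fCont Wm Wp T) (Set.Icc 0 zs) :=
    hcontIci.mono (Set.Icc_subset_Ici_self)
  have hIVT := intermediate_value_Icc' hzs_pos.le hcont'
  have h0mem : (0:ℝ) ∈ Set.Icc (fCont Wm Wp T zs) (fCont Wm Wp T 0) := by
    constructor
    · exact le_of_lt hfzs
    · rw [hf0]; exact le_of_lt hc_pos
  obtain ⟨zhat, hzmem, hfz⟩ := hIVT h0mem
  refine ⟨zhat, ?_, hfz⟩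
  rcases lt_or_eq_of_le hzmem.1 with h | h
  · exact h
  · exfalso
    rw [← h] at hfz
    rw [hf0] at hfz
    exact (ne_of_gt hc_pos) hfz
end

section
/- Each function f^{r,α,β}, (r,α,β) ∈ V, and the function g are continuous at every z ∈ [0,∞)^V. Moreover, each f^{r,α,β} is monotonically non-decreasing in every coordinate z^{r',α',β'} with (r',α',β') ≠ (r,α,β). -/
open MeasureTheory Filter Set Topology

open Classical in
/-- Probability that a Poisson(q) random variable equals `k`. -/
noncomputable def poisProb (q : ℝ) (k : ℕ) : ℝ := Real.exp (-q) * q ^ k / (Nat.factorial k : ℝ)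

open Classical in
/-- `psiMulti q l = P(∑_{s=1}^R s · Q_s ≥ l)` for independent `Q_s ~ Poi(q s)`;
in particular it equals `1` for `l ≤ 0` and `0` for `l = ∞`. -/
noncomputable def psiMulti {R : ℕ} (q : Fin R → ℝ) (l : WithTop ℤ) : ℝ :=
  ∑' k : Fin R → ℕ,
    if l ≤ ((((∑ s : Fin R, ((s : ℕ) + 1) * k s) : ℕ) : ℤ) : WithTop ℤ) then
      ∏ s, poisProb (q s) (k s)
    else 0

/-- Embedding of `ℕ ∪ {∞}` into `ℤ ∪ {∞}`. -/
noncomputable def natCastTop (c : WithTop ℕ) : WithTop ℤ := WithTop.map (fun n : ℕ => (n : ℤ)) c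

/-- The function `f^{r,α,β}(z) = E[W^{+,r,α} ψ(∑_γ W^{-,1,γ} z^{1,β,γ}, …, ∑_γ W^{-,R,γ} z^{R,β,γ}; C)
1{A=β}] − z^{r,α,β}` (with `v = (r,α,β)`). -/
noncomputable def fV {Ω : Type*} [MeasureSpace Ω] {R T : ℕ}
    (Wm Wp : Ω → Fin R → Fin T → ℝ) (C : Ω → WithTop ℕ) (A : Ω → Fin T)
    (v : Fin R × Fin T × Fin T) (z : Fin R × Fin T × Fin T → ℝ) : ℝ :=
  (∫ ω, if A ω = v.2.2 then
      Wp ω v.1 v.2.1 *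
        psiMulti (fun s => ∑ γ, Wm ω s γ * z (s, v.2.2, γ)) (natCastTop (C ω))
    else 0) - z v

/-- The function `g(z) = ∑_β E[S ψ(…; C) 1{A=β}]`. -/
noncomputable def gV {Ω : Type*} [MeasureSpace Ω] {R T : ℕ}
    (Wm : Ω → Fin R → Fin T → ℝ) (S : Ω → ℝ) (C : Ω → WithTop ℕ) (A : Ω → Fin T)
    (z : Fin R × Fin T × Fin T → ℝ) : ℝ :=
  ∑ β, ∫ ω, if A ω = β then
      S ω * psiMulti (fun s => ∑ γ, Wm ω s γ * z (s, β, γ)) (natCastTop (C ω))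
    else 0

/-- The nonnegative orthant `[0,∞)^V`. -/
def nonnegV (R T : ℕ) : Set ((Fin R × Fin T × Fin T) → ℝ) := {z | ∀ v, 0 ≤ z v}

/-- The set `P = ∩_{(r,α,β) ∈ V} {z ∈ [0,∞)^V : f^{r,α,β}(z) ≥ 0}`. -/
noncomputable def PsetV {Ω : Type*} [MeasureSpace Ω] {R T : ℕ}
    (Wm Wp : Ω → Fin R → Fin T → ℝ) (C : Ω → WithTop ℕ) (A : Ω → Fin T) :
    Set ((Fin R × Fin T × Fin T) → ℝ) :=
  {z | z ∈ nonnegV R T ∧ ∀ v, 0 ≤ fV Wm Wp C A v z}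

/-- `P₀`, the largest connected subset of `P` containing `0`. -/
noncomputable def P0V {Ω : Type*} [MeasureSpace Ω] {R T : ℕ}
    (Wm Wp : Ω → Fin R → Fin T → ℝ) (C : Ω → WithTop ℕ) (A : Ω → Fin T) :
    Set ((Fin R × Fin T × Fin T) → ℝ) :=
  connectedComponentIn (PsetV Wm Wp C A) 0

/-- `z*`, defined by `(z*)^{r,α,β} = sup_{z ∈ P₀} z^{r,α,β}`. -/
noncomputable def zStarV {Ω : Type*} [MeasureSpace Ω] {R T : ℕ}
    (Wm Wp : Ω → Fin R → Fin T → ℝ) (C : Ω → WithTop ℕ) (A : Ω → Fin T) :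
    (Fin R × Fin T × Fin T) → ℝ :=
  fun v => sSup ((fun z => z v) '' P0V Wm Wp C A)

/-! ### Auxiliary lemmas -/

section Aux

lemma poisProb_nonneg {q : ℝ} (hq : 0 ≤ q) (k : ℕ) : 0 ≤ poisProb q k := by
  unfold poisProb; positivity

lemma hasSum_poisProb {q : ℝ} (hq : 0 ≤ q) : HasSum (poisProb q) 1 := by
  have := ProbabilityTheory.poissonPMFRealSum ⟨q, hq⟩
  convert this using 1
  funext n
  simp [ProbabilityTheory.poissonPMFReal, poisProb]
  rfl

lemma hasSum_one_prod {α β : Type*} (f : α → ℝ) (g : β → ℝ) (hf : HasSum f 1) (hg : HasSum g 1)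
    (h1 : ∀ a, 0 ≤ f a) (h2 : ∀ b, 0 ≤ g b) :
    HasSum (fun p : α × β => f p.1 * g p.2) 1 := by
  have hsum : Summable (fun p : α × β => f p.1 * g p.2) :=
    hf.summable.mul_of_nonneg hg.summable h1 h2
  have h := hf.mul_eq hg hsum.hasSum
  rw [one_mul] at h
  exact h ▸ hsum.hasSum

lemma hasSum_pi_prod : ∀ (R : ℕ) (f : Fin R → ℕ → ℝ), (∀ s k, 0 ≤ f s k) →
    (∀ s, HasSum (f s) 1) →
    HasSum (fun k : Fin R → ℕ => ∏ s, f s (k s)) 1 := by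
  intro R
  induction R with
  | zero =>
    intro f _ _
    simpa using hasSum_ite_eq (default : Fin 0 → ℕ) (1:ℝ)
  | succ n ih =>
    intro f hnn hs
    have ih' : HasSum (fun k : Fin n → ℕ => ∏ s : Fin n, f s.succ (k s)) 1 :=
      ih (fun s => f s.succ) (fun s k => hnn _ k) (fun s => hs _)
    have h2 := hasSum_one_prod (f 0) (fun k : Fin n → ℕ => ∏ s : Fin n, f s.succ (k s))
      (hs 0) ih' (fun k => hnn 0 k) (fun k => Finset.prod_nonneg fun s _ => hnn s.succ (k s))
    rw [← (Fin.consEquiv (fun _ : Fin (n+1) => ℕ)).hasSum_iff]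
    convert h2 using 1
    ext p
    simp [Fin.consEquiv, Fin.prod_univ_succ]

lemma hasSum_prod_poisProb {R : ℕ} {q : Fin R → ℝ} (hq : ∀ s, 0 ≤ q s) :
    HasSum (fun k : Fin R → ℕ => ∏ s, poisProb (q s) (k s)) 1 :=
  hasSum_pi_prod R (fun s => poisProb (q s)) (fun s k => poisProb_nonneg (hq s) k)
    (fun s => hasSum_poisProb (hq s))

/-- The finite set of "bad" configurations with weighted sum `< m`. -/
noncomputable def badSet (R : ℕ) (m : ℤ) : Finset (Fin R → ℕ) :=
  (Fintype.piFinset fun _ => Finset.range m.toNat).filter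
    fun k => (((∑ s : Fin R, ((s : ℕ) + 1) * k s : ℕ) : ℤ) < m)

noncomputable def badSum {R : ℕ} (m : ℤ) (q : Fin R → ℝ) : ℝ :=
  ∑ k ∈ badSet R m, ∏ s, poisProb (q s) (k s)

/-- Closed-form surrogate for `psiMulti` valid on the nonnegative orthant. -/
noncomputable def psiAux {R : ℕ} (q : Fin R → ℝ) : WithTop ℤ → ℝ
  | ⊤ => 0
  | (m : ℤ) => 1 - badSum m q

@[simp] lemma psiAux_top {R : ℕ} (q : Fin R → ℝ) : psiAux q ⊤ = 0 := rfl
@[simp] lemma psiAux_coe {R : ℕ} (q : Fin R → ℝ) (m : ℤ) :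
    psiAux q (m : WithTop ℤ) = 1 - badSum m q := rfl

lemma psiMulti_top {R : ℕ} (q : Fin R → ℝ) : psiMulti q ⊤ = 0 := by
  unfold psiMulti
  rw [tsum_congr (fun k => if_neg (WithTop.not_top_le_coe _)), tsum_zero]

lemma mem_badSet_of_lt {R : ℕ} {m : ℤ} {k : Fin R → ℕ}
    (h : ((∑ s : Fin R, ((s : ℕ) + 1) * k s : ℕ) : ℤ) < m) : k ∈ badSet R m := by
  refine Finset.mem_filter.2 ⟨Fintype.mem_piFinset.2 fun s => Finset.mem_range.2 ?_, h⟩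
  rw [Int.lt_toNat]
  calc ((k s : ℤ)) ≤ ((((s:ℕ)+1) * k s : ℕ) : ℤ) := by
        push_cast; nlinarith [Int.ofNat_nonneg (k s), Int.ofNat_nonneg s.val]
    _ ≤ ((∑ s : Fin R, ((s : ℕ) + 1) * k s : ℕ) : ℤ) :=
        Nat.cast_le.2 (Finset.single_le_sum (f := fun s : Fin R => ((s:ℕ)+1) * k s)
          (fun i _ => Nat.zero_le _) (Finset.mem_univ s))
    _ < m := h

lemma psiMulti_coe {R : ℕ} (q : Fin R → ℝ) (hq : ∀ s, 0 ≤ q s) (m : ℤ) :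
    psiMulti q ((m : ℤ) : WithTop ℤ) = 1 - badSum m q := by
  classical
  set P : (Fin R → ℕ) → ℝ := fun k => ∏ s, poisProb (q s) (k s) with hPdef
  have hP : HasSum P 1 := hasSum_prod_poisProb hq
  have hPnn : ∀ k, 0 ≤ P k := fun k => Finset.prod_nonneg fun s _ => poisProb_nonneg (hq s) _
  set ind : (Fin R → ℕ) → ℝ := fun k =>
    if ((∑ s : Fin R, ((s : ℕ) + 1) * k s : ℕ) : ℤ) < m then P k else 0 with hinddef
  have hind_sum : ∑' k, ind k = badSum m q := by
    rw [tsum_eq_sum (s := badSet R m) (fun k hk => by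
      rw [hinddef]; simp only; rw [if_neg]; intro h; exact hk (mem_badSet_of_lt h))]
    refine Finset.sum_congr rfl fun k hk => ?_
    rw [hinddef]; simp only [if_pos ((Finset.mem_filter.1 hk).2)]; rfl
  have hind_summable : Summable ind := by
    apply Summable.of_nonneg_of_le
      (fun k => by rw [hinddef]; dsimp; split <;> [exact hPnn k; exact le_rfl])
      (fun k => by rw [hinddef]; dsimp; split <;> [exact le_rfl; exact hPnn k]) hP.summable
  have key : ∀ k, (if ((m:ℤ):WithTop ℤ) ≤
        ((((∑ s : Fin R, ((s : ℕ) + 1) * k s) : ℕ) : ℤ) : WithTop ℤ) then P k else 0)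
      = P k - ind k := by
    intro k
    by_cases h : ((∑ s : Fin R, ((s : ℕ) + 1) * k s : ℕ) : ℤ) < m
    · rw [if_neg (by rw [WithTop.coe_le_coe]; exact not_le.2 h)]
      simp only [hinddef, if_pos h]
      ring
    · rw [if_pos (by rw [WithTop.coe_le_coe]; exact not_lt.1 h)]
      simp only [hinddef, if_neg h]
      ring
  unfold psiMulti
  calc ∑' k, (if ((m:ℤ):WithTop ℤ) ≤
        ((((∑ s : Fin R, ((s : ℕ) + 1) * k s) : ℕ) : ℤ) : WithTop ℤ) then P k else 0)
      = ∑' k, (P k - ind k) := tsum_congr key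
    _ = (∑' k, P k) - ∑' k, ind k := Summable.tsum_sub hP.summable hind_summable
    _ = 1 - badSum m q := by rw [hP.tsum_eq, hind_sum]

lemma psiMulti_eq_psiAux {R : ℕ} {q : Fin R → ℝ} (hq : ∀ s, 0 ≤ q s) (l : WithTop ℤ) :
    psiMulti q l = psiAux q l := by
  cases l with
  | top => rw [psiMulti_top, psiAux_top]
  | coe m => rw [psiMulti_coe q hq m, psiAux_coe]

lemma badSum_nonneg {R : ℕ} {q : Fin R → ℝ} (hq : ∀ s, 0 ≤ q s) (m : ℤ) :
    0 ≤ badSum m q :=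
  Finset.sum_nonneg fun k _ => Finset.prod_nonneg fun s _ => poisProb_nonneg (hq s) _

lemma badSum_le_one {R : ℕ} {q : Fin R → ℝ} (hq : ∀ s, 0 ≤ q s) (m : ℤ) :
    badSum m q ≤ 1 := by
  have hP := hasSum_prod_poisProb hq
  calc badSum m q ≤ ∑' k : Fin R → ℕ, ∏ s, poisProb (q s) (k s) :=
        Summable.sum_le_tsum (badSet R m)
          (fun k _ => Finset.prod_nonneg fun s _ => poisProb_nonneg (hq s) _) hP.summable
    _ = 1 := hP.tsum_eq

lemma psiAux_nonneg {R : ℕ} {q : Fin R → ℝ} (hq : ∀ s, 0 ≤ q s) (l : WithTop ℤ) :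
    0 ≤ psiAux q l := by
  cases l with
  | top => simp
  | coe m => simp only [psiAux_coe]; linarith [badSum_le_one hq m]

lemma psiAux_le_one {R : ℕ} {q : Fin R → ℝ} (hq : ∀ s, 0 ≤ q s) (l : WithTop ℤ) :
    psiAux q l ≤ 1 := by
  cases l with
  | top => simp
  | coe m => simp only [psiAux_coe]; linarith [badSum_nonneg hq m]

lemma continuous_badSum {R : ℕ} (m : ℤ) : Continuous fun q : Fin R → ℝ => badSum m q := by
  unfold badSum
  apply continuous_finset_sum
  intro k _
  apply continuous_finset_prod
  intro s _
  unfold poisProb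
  exact ((Real.continuous_exp.comp (continuous_apply s).neg).mul
    ((continuous_apply s).pow _)).div_const _

lemma continuous_psiAux {R : ℕ} (l : WithTop ℤ) :
    Continuous fun q : Fin R → ℝ => psiAux q l := by
  cases l with
  | top => exact continuous_const
  | coe m => exact continuous_const.sub (continuous_badSum m)

lemma hasDerivAt_poisProb (j : ℕ) (t : ℝ) :
    HasDerivAt (fun t => poisProb t j)
      ((-Real.exp (-t) * t ^ j + Real.exp (-t) * ((j:ℝ) * t ^ (j - 1)))
        / (Nat.factorial j : ℝ)) t := by
  have h1 : HasDerivAt (fun t : ℝ => Real.exp (-t)) (-Real.exp (-t)) t := by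
    have := ((Real.hasDerivAt_exp (-t)).comp t (hasDerivAt_neg t))
    simp only [mul_neg, mul_one] at this
    exact this
  have h2 : HasDerivAt (fun t : ℝ => t ^ j) ((j:ℝ) * t ^ (j - 1)) t := hasDerivAt_pow j t
  simpa [poisProb] using (h1.mul h2).div_const (Nat.factorial j : ℝ)

lemma exp_mul_pow_eq (j : ℕ) (hj : j ≠ 0) (t : ℝ) :
    Real.exp (-t) * ((j:ℝ) * t ^ (j - 1)) / (Nat.factorial j : ℝ) = poisProb t (j - 1) := by
  obtain ⟨i, rfl⟩ := Nat.exists_eq_succ_of_ne_zero hj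
  unfold poisProb
  rw [Nat.succ_sub_one, Nat.factorial_succ]
  push_cast
  field_simp

lemma badSum_antitone {R : ℕ} (m : ℤ) (q q' : Fin R → ℝ) (s0 : Fin R)
    (hq : ∀ s, 0 ≤ q s) (hle : ∀ s, q s ≤ q' s) (heq : ∀ s, s ≠ s0 → q s = q' s) :
    badSum m q' ≤ badSum m q := by
  classical
  set c : (Fin R → ℕ) → ℝ :=
    fun k => ∏ s ∈ Finset.univ.erase s0, poisProb (q s) (k s) with hc
  have hcnn : ∀ k, 0 ≤ c k := fun k => Finset.prod_nonneg fun s _ => poisProb_nonneg (hq s) _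
  set H : ℝ → ℝ := fun t => ∑ k ∈ badSet R m, poisProb t (k s0) * c k with hH
  have hderiv : ∀ t, HasDerivAt H
      (∑ k ∈ badSet R m,
        ((-Real.exp (-t) * t ^ (k s0) + Real.exp (-t) * (((k s0):ℝ) * t ^ (k s0 - 1)))
          / (Nat.factorial (k s0) : ℝ)) * c k) t := by
    intro t
    exact HasDerivAt.fun_sum fun k _ => (hasDerivAt_poisProb (k s0) t).mul_const (c k)
  have hmain : ∀ t : ℝ, 0 < t →
      (∑ k ∈ badSet R m,
        ((-Real.exp (-t) * t ^ (k s0) + Real.exp (-t) * (((k s0):ℝ) * t ^ (k s0 - 1)))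
          / (Nat.factorial (k s0) : ℝ)) * c k) ≤ 0 := by
    intro t ht
    have expand : ∀ k : Fin R → ℕ,
        ((-Real.exp (-t) * t ^ (k s0) + Real.exp (-t) * (((k s0):ℝ) * t ^ (k s0 - 1)))
          / (Nat.factorial (k s0) : ℝ)) * c k
        = (Real.exp (-t) * (((k s0):ℝ) * t ^ (k s0 - 1)) / (Nat.factorial (k s0) : ℝ)) * c k
          - poisProb t (k s0) * c k := by
      intro k; unfold poisProb; ring
    rw [Finset.sum_congr rfl fun k _ => expand k, Finset.sum_sub_distrib, sub_nonpos]
    rw [← Finset.sum_filter_add_sum_filter_not (badSet R m) (fun k => k s0 ≠ 0)]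
    have hzero : ∑ k ∈ (badSet R m).filter (fun k => ¬ k s0 ≠ 0),
        (Real.exp (-t) * (((k s0):ℝ) * t ^ (k s0 - 1)) / (Nat.factorial (k s0) : ℝ)) * c k
        = 0 := by
      apply Finset.sum_eq_zero
      intro k hk
      have : k s0 = 0 := by simpa using (Finset.mem_filter.1 hk).2
      rw [this]; simp
    rw [hzero, add_zero]
    have hrw : ∑ k ∈ (badSet R m).filter (fun k => k s0 ≠ 0),
        (Real.exp (-t) * (((k s0):ℝ) * t ^ (k s0 - 1)) / (Nat.factorial (k s0) : ℝ)) * c k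
        = ∑ k ∈ (badSet R m).filter (fun k => k s0 ≠ 0), poisProb t (k s0 - 1) * c k := by
      refine Finset.sum_congr rfl fun k hk => ?_
      rw [exp_mul_pow_eq _ (by simpa using (Finset.mem_filter.1 hk).2)]
    rw [hrw]
    set φ : (Fin R → ℕ) → (Fin R → ℕ) := fun k => Function.update k s0 (k s0 - 1) with hφ
    have hgnn : ∀ k, 0 ≤ poisProb t (k s0) * c k :=
      fun k => mul_nonneg (poisProb_nonneg ht.le _) (hcnn k)
    have himg : ∑ k ∈ (badSet R m).filter (fun k => k s0 ≠ 0), poisProb t (k s0 - 1) * c k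
        = ∑ k' ∈ ((badSet R m).filter (fun k => k s0 ≠ 0)).image φ,
            poisProb t (k' s0) * c k' := by
      rw [Finset.sum_image]
      · refine Finset.sum_congr rfl fun k hk => ?_
        congr 1
        · congr 1
          simp [hφ, Function.update_self]
        · rw [hc]
          refine Finset.prod_congr rfl fun s hs => ?_
          simp only [hφ, Function.update_of_ne (Finset.mem_erase.1 hs).1]
      · intro k hk k' hk' hkk'
        have h1 := (Finset.mem_filter.1 hk).2
        have h2 := (Finset.mem_filter.1 hk').2
        funext s
        by_cases hss : s = s0
        · subst hss
          have := congrFun hkk' s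
          simp only [hφ, Function.update_self] at this
          omega
        · have := congrFun hkk' s
          simpa only [hφ, Function.update_of_ne hss] using this
    rw [himg]
    apply Finset.sum_le_sum_of_subset_of_nonneg
    · intro k' hk'
      obtain ⟨k, hk, rfl⟩ := Finset.mem_image.1 hk'
      have hkmem := (Finset.mem_filter.1 hk).1
      have hkbad := Finset.mem_filter.1 hkmem
      refine Finset.mem_filter.2 ⟨Fintype.mem_piFinset.2 fun s => ?_, ?_⟩
      · have := Fintype.mem_piFinset.1 hkbad.1 s
        rw [Finset.mem_range] at this ⊢
        by_cases hss : s = s0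
        · subst hss; simp only [hφ, Function.update_self]; omega
        · simpa only [hφ, Function.update_of_ne hss] using this
      · refine lt_of_le_of_lt ?_ hkbad.2
        rw [Nat.cast_le]
        apply Finset.sum_le_sum
        intro s _
        by_cases hss : s = s0
        · subst hss; simp only [hφ, Function.update_self]
          exact Nat.mul_le_mul_left _ (Nat.sub_le _ _)
        · simp only [hφ, Function.update_of_ne hss]
          exact le_rfl
    · intro k _ _
      exact hgnn k
  have hanti : AntitoneOn H (Set.Ici (0:ℝ)) := by
    apply antitoneOn_of_deriv_nonpos (convex_Ici 0)
    · exact (Continuous.continuousOn (continuous_iff_continuousAt.2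
        fun t => (hderiv t).continuousAt))
    · intro t _
      exact (hderiv t).differentiableAt.differentiableWithinAt
    · intro t ht
      rw [interior_Ici] at ht
      rw [(hderiv t).deriv]
      exact hmain t ht
  have hq1 : badSum m q = H (q s0) := by
    rw [hH]
    refine Finset.sum_congr rfl fun k _ => ?_
    rw [hc, ← Finset.mul_prod_erase Finset.univ _ (Finset.mem_univ s0)]
  have hq2 : badSum m q' = H (q' s0) := by
    rw [hH]
    refine Finset.sum_congr rfl fun k _ => ?_
    rw [hc, ← Finset.mul_prod_erase Finset.univ _ (Finset.mem_univ s0)]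
    congr 1
    refine Finset.prod_congr rfl fun s hs => ?_
    rw [heq s (Finset.mem_erase.1 hs).1]
  rw [hq1, hq2]
  exact hanti (Set.mem_Ici.2 (hq s0)) (Set.mem_Ici.2 ((hq s0).trans (hle s0))) (hle s0)

lemma psiMulti_mono {R : ℕ} (q q' : Fin R → ℝ) (s0 : Fin R)
    (hq : ∀ s, 0 ≤ q s) (hle : ∀ s, q s ≤ q' s) (heq : ∀ s, s ≠ s0 → q s = q' s)
    (l : WithTop ℤ) : psiMulti q l ≤ psiMulti q' l := by
  have hq' : ∀ s, 0 ≤ q' s := fun s => (hq s).trans (hle s)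
  rw [psiMulti_eq_psiAux hq, psiMulti_eq_psiAux hq']
  cases l with
  | top => simp
  | coe m =>
    simp only [psiAux_coe]
    have := badSum_antitone m q q' s0 hq hle heq
    linarith

end Aux

section Main

variable {Ω : Type*} [MeasureSpace Ω]
  {R T : ℕ} (Wm : Ω → Fin R → Fin T → ℝ) (C : Ω → WithTop ℕ) (A : Ω → Fin T)

lemma natCastTop_top : natCastTop (⊤ : WithTop ℕ) = ⊤ := WithTop.map_top _

lemma natCastTop_coe (n : ℕ) : natCastTop (n : WithTop ℕ) = ((n : ℤ) : WithTop ℤ) :=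
  WithTop.map_coe _ _


lemma qz_nonneg (hWm_nonneg : ∀ ω r α, 0 ≤ Wm ω r α) (β : Fin T)
    {z : (Fin R × Fin T × Fin T) → ℝ} (hz : z ∈ nonnegV R T) (ω : Ω) (s : Fin R) :
    0 ≤ ∑ γ, Wm ω s γ * z (s, β, γ) :=
  Finset.sum_nonneg fun γ _ => mul_nonneg (hWm_nonneg ω s γ) (hz (s, β, γ))

lemma integrand_meas (hWm_meas : ∀ r α, Measurable fun ω => Wm ω r α)
    (hA_meas : Measurable A) (hC_meas : ∀ l : WithTop ℕ, MeasurableSet {ω | C ω = l})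
    (hWm_nonneg : ∀ ω r α, 0 ≤ Wm ω r α)
    (W : Ω → ℝ) (hW : Measurable W) (β : Fin T)
    {z : (Fin R × Fin T × Fin T) → ℝ} (hz : z ∈ nonnegV R T) :
    Measurable fun ω => if A ω = β then
      W ω * psiMulti (fun s => ∑ γ, Wm ω s γ * z (s, β, γ)) (natCastTop (C ω)) else 0 := by
  have hqz : Measurable fun ω => (fun s => ∑ γ, Wm ω s γ * z (s, β, γ)) :=
    measurable_pi_lambda _ fun s =>
      Finset.measurable_sum _ fun γ _ => (hWm_meas s γ).mul_const _
  have hpsi : Measurable fun ω =>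
      psiMulti (fun s => ∑ γ, Wm ω s γ * z (s, β, γ)) (natCastTop (C ω)) := by
    apply measurable_of_tendsto_metrizable
      (f := fun N ω => ∑ n ∈ Finset.range N,
        Set.indicator {ω | C ω = (n : WithTop ℕ)}
          (fun ω => psiAux (fun s => ∑ γ, Wm ω s γ * z (s, β, γ)) ((n : ℤ) : WithTop ℤ)) ω)
    · intro N
      apply Finset.measurable_sum
      intro n _
      exact (((continuous_psiAux (((n : ℤ) : WithTop ℤ))).measurable).comp hqz).indicator
        (hC_meas _)
    · rw [tendsto_pi_nhds]
      intro ω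
      rcases hCω : C ω with _ | n0
      · have hzero : ∀ N, ∑ n ∈ Finset.range N,
            Set.indicator {ω | C ω = (n : WithTop ℕ)}
              (fun ω => psiAux (fun s => ∑ γ, Wm ω s γ * z (s, β, γ)) ((n : ℤ) : WithTop ℤ)) ω
            = 0 := by
          intro N
          apply Finset.sum_eq_zero
          intro n _
          apply Set.indicator_of_notMem
          simp only [Set.mem_setOf_eq, hCω]
          exact fun h => (WithTop.coe_ne_top (h.symm)).elim
        simp only [hzero]
        rw [show (none : WithTop ℕ) = (⊤ : WithTop ℕ) from rfl, natCastTop_top, psiMulti_top]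
        exact tendsto_const_nhds
      · apply tendsto_atTop_of_eventually_const (i₀ := n0 + 1)
        intro N hN
        have hsum : ∑ n ∈ Finset.range N,
            Set.indicator {ω | C ω = (n : WithTop ℕ)}
              (fun ω => psiAux (fun s => ∑ γ, Wm ω s γ * z (s, β, γ)) ((n : ℤ) : WithTop ℤ)) ω
            = psiAux (fun s => ∑ γ, Wm ω s γ * z (s, β, γ)) ((n0 : ℤ) : WithTop ℤ) := by
          rw [Finset.sum_eq_single_of_mem n0 (Finset.mem_range.2 hN)]
          · exact Set.indicator_of_mem (by simp only [Set.mem_setOf_eq]; exact hCω) _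
          · intro n _ hn
            apply Set.indicator_of_notMem
            simp only [Set.mem_setOf_eq, hCω]
            intro h
            rw [show ((n : WithTop ℕ)) = some n from rfl] at h
            exact hn (Option.some_inj.1 h.symm)
        rw [hsum, show (some n0 : WithTop ℕ) = (n0 : WithTop ℕ) from rfl, natCastTop_coe,
          psiMulti_eq_psiAux (qz_nonneg Wm hWm_nonneg β hz ω)]
  exact Measurable.ite (hA_meas (MeasurableSet.singleton β)) (hW.mul hpsi) measurable_const

lemma integrand_bound (hWm_nonneg : ∀ ω r α, 0 ≤ Wm ω r α)
    (W : Ω → ℝ) (hWnn : ∀ ω, 0 ≤ W ω) (β : Fin T)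
    {z : (Fin R × Fin T × Fin T) → ℝ} (hz : z ∈ nonnegV R T) (ω : Ω) :
    ‖if A ω = β then
      W ω * psiMulti (fun s => ∑ γ, Wm ω s γ * z (s, β, γ)) (natCastTop (C ω)) else 0‖
      ≤ W ω := by
  have hq := qz_nonneg Wm hWm_nonneg β hz ω
  rw [psiMulti_eq_psiAux hq]
  split
  · rw [Real.norm_eq_abs, abs_of_nonneg (mul_nonneg (hWnn ω) (psiAux_nonneg hq _))]
    calc W ω * psiAux _ _ ≤ W ω * 1 :=
        mul_le_mul_of_nonneg_left (psiAux_le_one hq _) (hWnn ω)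
      _ = W ω := mul_one _
  · simpa using hWnn ω

lemma integrand_contOn (hWm_nonneg : ∀ ω r α, 0 ≤ Wm ω r α)
    (W : Ω → ℝ) (β : Fin T) (ω : Ω) :
    ContinuousOn (fun z : (Fin R × Fin T × Fin T) → ℝ => if A ω = β then
      W ω * psiMulti (fun s => ∑ γ, Wm ω s γ * z (s, β, γ)) (natCastTop (C ω)) else 0)
      (nonnegV R T) := by
  by_cases hA : A ω = β
  · simp only [if_pos hA]
    apply ContinuousOn.mul continuousOn_const
    have hc : ContinuousOn (fun z : (Fin R × Fin T × Fin T) → ℝ =>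
        psiAux (fun s => ∑ γ, Wm ω s γ * z (s, β, γ)) (natCastTop (C ω))) (nonnegV R T) := by
      apply Continuous.continuousOn
      exact (continuous_psiAux (natCastTop (C ω))).comp
        (continuous_pi fun s => continuous_finset_sum Finset.univ fun γ _ =>
          (continuous_const.mul (continuous_apply (s, β, γ)) :
            Continuous fun z : (Fin R × Fin T × Fin T) → ℝ => Wm ω s γ * z (s, β, γ)))
    exact hc.congr fun z hz => psiMulti_eq_psiAux (qz_nonneg Wm hWm_nonneg β hz ω) _
  · simp only [if_neg hA]
    exact continuousOn_const

lemma integral_contOn (hWm_nonneg : ∀ ω r α, 0 ≤ Wm ω r α)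
    (hWm_meas : ∀ r α, Measurable fun ω => Wm ω r α)
    (hA_meas : Measurable A) (hC_meas : ∀ l : WithTop ℕ, MeasurableSet {ω | C ω = l})
    (W : Ω → ℝ) (hW : Measurable W) (hWnn : ∀ ω, 0 ≤ W ω) (hWint : Integrable W) (β : Fin T) :
    ContinuousOn (fun z : (Fin R × Fin T × Fin T) → ℝ => ∫ ω, if A ω = β then
      W ω * psiMulti (fun s => ∑ γ, Wm ω s γ * z (s, β, γ)) (natCastTop (C ω)) else 0)
      (nonnegV R T) := by
  apply continuousOn_of_dominated
  · intro z hz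
    exact (integrand_meas Wm C A hWm_meas hA_meas hC_meas hWm_nonneg W hW β hz).aestronglyMeasurable
  · intro z hz
    exact ae_of_all _ (integrand_bound Wm C A hWm_nonneg W hWnn β hz)
  · exact hWint
  · exact ae_of_all _ (integrand_contOn Wm C A hWm_nonneg W β)



end Main

set_option maxHeartbeats 1000000 in
/-- Each `f^{r,α,β}` and `g` is continuous on `[0,∞)^V`, and each `f^{r,α,β}` is
non-decreasing in every coordinate other than `(r,α,β)`. -/
theorem stmt_2
    {Ω : Type*} [MeasureSpace Ω] [IsProbabilityMeasure (volume : Measure Ω)]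
    {R T : ℕ} (hR : 0 < R) (hT : 0 < T)
    (Wm Wp : Ω → Fin R → Fin T → ℝ) (S : Ω → ℝ) (C : Ω → WithTop ℕ) (A : Ω → Fin T)
    (hWm_nonneg : ∀ ω r α, 0 ≤ Wm ω r α) (hWp_nonneg : ∀ ω r α, 0 ≤ Wp ω r α)
    (hS_nonneg : ∀ ω, 0 ≤ S ω)
    (hWm_meas : ∀ r α, Measurable fun ω => Wm ω r α)
    (hWp_meas : ∀ r α, Measurable fun ω => Wp ω r α)
    (hS_meas : Measurable S) (hA_meas : Measurable A)
    (hC_meas : ∀ l : WithTop ℕ, MeasurableSet {ω | C ω = l})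
    (hWm_int : ∀ r α, Integrable fun ω => Wm ω r α)
    (hWp_int : ∀ r α, Integrable fun ω => Wp ω r α)
    (hS_int : Integrable S)
    :
    (∀ v, ContinuousOn (fV Wm Wp C A v) (nonnegV R T)) ∧
    ContinuousOn (gV Wm S C A) (nonnegV R T) ∧
    (∀ v u : Fin R × Fin T × Fin T, u ≠ v → ∀ z ∈ nonnegV R T, ∀ t t' : ℝ,
      0 ≤ t → t ≤ t' →
        fV Wm Wp C A v (Function.update z u t) ≤ fV Wm Wp C A v (Function.update z u t')) := by
  refine ⟨?_, ?_, ?_⟩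
  · intro v
    unfold fV
    apply ContinuousOn.sub
    · exact integral_contOn Wm C A hWm_nonneg hWm_meas hA_meas hC_meas
        (fun ω => Wp ω v.1 v.2.1) (hWp_meas v.1 v.2.1)
        (fun ω => hWp_nonneg ω v.1 v.2.1) (hWp_int v.1 v.2.1) v.2.2
    · exact (continuous_apply v).continuousOn
  · unfold gV
    apply continuousOn_finset_sum
    intro β _
    exact integral_contOn Wm C A hWm_nonneg hWm_meas hA_meas hC_meas
      S hS_meas hS_nonneg hS_int β
  · intro v u hne z hz t t' ht htt'
    have hzt : Function.update z u t ∈ nonnegV R T := by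
      intro w
      by_cases hw : w = u
      · subst hw; rw [Function.update_self]; exact ht
      · rw [Function.update_of_ne hw]; exact hz w
    have hzt' : Function.update z u t' ∈ nonnegV R T := by
      intro w
      by_cases hw : w = u
      · subst hw; rw [Function.update_self]; exact ht.trans htt'
      · rw [Function.update_of_ne hw]; exact hz w
    unfold fV
    rw [Function.update_of_ne (Ne.symm hne), Function.update_of_ne (Ne.symm hne)]
    apply sub_le_sub_right
    have hint : ∀ zz : (Fin R × Fin T × Fin T) → ℝ, zz ∈ nonnegV R T →
        Integrable fun ω => if A ω = v.2.2 then
          Wp ω v.1 v.2.1 *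
            psiMulti (fun s => ∑ γ, Wm ω s γ * zz (s, v.2.2, γ)) (natCastTop (C ω))
          else 0 := by
      intro zz hzz
      exact (hWp_int v.1 v.2.1).mono'
        (integrand_meas Wm C A hWm_meas hA_meas hC_meas hWm_nonneg
          (fun ω => Wp ω v.1 v.2.1) (hWp_meas v.1 v.2.1) v.2.2 hzz).aestronglyMeasurable
        (ae_of_all _ (integrand_bound Wm C A hWm_nonneg
          (fun ω => Wp ω v.1 v.2.1) (fun ω => hWp_nonneg ω v.1 v.2.1) v.2.2 hzz))
    refine integral_mono (hint _ hzt) (hint _ hzt') ?_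
    intro ω
    by_cases hA : A ω = v.2.2
    · simp only [if_pos hA]
      refine mul_le_mul_of_nonneg_left ?_ (hWp_nonneg ω v.1 v.2.1)
      refine psiMulti_mono _ _ u.1 (qz_nonneg Wm hWm_nonneg v.2.2 hzt ω) ?_ ?_ _
      · intro s
        refine Finset.sum_le_sum fun γ _ => ?_
        refine mul_le_mul_of_nonneg_left ?_ (hWm_nonneg ω s γ)
        by_cases h : (s, v.2.2, γ) = u
        · rw [h, Function.update_self, Function.update_self]; exact htt'
        · rw [Function.update_of_ne h, Function.update_of_ne h]
      · intro s hs
        refine Finset.sum_congr rfl fun γ _ => ?_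
        have h : ((s, v.2.2, γ) : Fin R × Fin T × Fin T) ≠ u :=
          fun h => hs (congrArg Prod.fst h)
        rw [Function.update_of_ne h, Function.update_of_ne h]
    · simp only [if_neg hA]
      exact le_rfl
end

section
/- Let χ̄_n ∈ [0,∞)^M denote the smallest solution of n^{−1} Σ_{i=1}^n x_i ρ((ℓ_i + x_i·h(χ))/c_i) = χ and let χ̂_n denote the smallest solution of n^{−1} Σ_{i=1}^n x_i ρ̊((ℓ_i + x_i·h(χ))/c_i) = χ (both smallest solutions exist). Then χ̂_n ≤ n^{−1} lim_{k→∞} σ_(k) ≤ χ̄_n componentwise. -/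
open MeasureTheory Filter Set Topology
open scoped ENNReal

/-- The fire-sales iteration `σ_(k)` (number of sold shares, not normalized by `n`):
`σ_(0) = 0` and `σ_(k+1)^m = ∑_i x_i^m ρ((ℓ_i + x_i · h(σ_(k)/n)) / c_i)`. -/
noncomputable def sigmaIter {M : ℕ} (ρ : ℝ → ℝ) (h : (Fin M → ℝ) → Fin M → ℝ)
    (n : ℕ) (x : Fin n → Fin M → ℝ) (c : Fin n → ℝ≥0∞) (ℓ : Fin n → ℝ) :
    ℕ → Fin M → ℝ
  | 0 => 0
  | k + 1 => fun m =>
      ∑ i, x i m *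
        ρ ((ℓ i + ∑ m', x i m' * h (fun m'' => sigmaIter ρ h n x c ℓ k m'' / (n : ℝ)) m') /
          (c i).toReal)

/-- For a right-continuous sale function `ρ` with left-continuous modification `ρ̊`, the limit of
the fire-sales iteration is sandwiched between the smallest solution `χ̂_n` of the `ρ̊`-fixed-point
equation and the smallest solution `χ̄_n` of the `ρ`-fixed-point equation. -/
theorem stmt_11 {M n : ℕ} (hn : 0 < n)
    (ρ : ℝ → ℝ) (hρ_mono : MonotoneOn ρ (Set.Ici 0))
    (hρ_rc : ∀ u ∈ Set.Ici (0:ℝ), ContinuousWithinAt ρ (Set.Ici u) u)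
    (hρ_zero : ρ 0 = 0) (hρ_mem : ∀ u ∈ Set.Ici (0:ℝ), ρ u ∈ Set.Icc (0:ℝ) 1)
    (hρ_plateau : ∀ u : ℝ, 1 ≤ u → ρ u = ρ 1)
    (ρc : ℝ → ℝ)
    (hρc : ∀ u : ℝ, 0 ≤ u → Tendsto (fun ε => ρ ((1 - ε) * u)) (𝓝[>] 0) (𝓝 (ρc u)))
    (h : (Fin M → ℝ) → Fin M → ℝ)
    (hh_cont : ∀ m, ContinuousOn (fun χ => h χ m) {χ : Fin M → ℝ | ∀ m', 0 ≤ χ m'})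
    (hh_mono : ∀ m (χ χ' : Fin M → ℝ), (∀ m', 0 ≤ χ m') → (∀ m', χ m' ≤ χ' m') → h χ m ≤ h χ' m)
    (hh_mem : ∀ m (χ : Fin M → ℝ), (∀ m', 0 ≤ χ m') → h χ m ∈ Set.Icc (0:ℝ) 1)
    (x : Fin n → Fin M → ℝ) (hx : ∀ i m, 0 ≤ x i m)
    (c : Fin n → ℝ≥0∞) (hc : ∀ i, 0 < c i)
    (ℓ : Fin n → ℝ) (hℓ : ∀ i, 0 ≤ ℓ i)
    (χbar : Fin M → ℝ) (hχbar_nonneg : ∀ m, 0 ≤ χbar m)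
    (hχbar_sol : ∀ m,
      (∑ i, x i m * ρ ((ℓ i + ∑ m', x i m' * h χbar m') / (c i).toReal)) / (n : ℝ) = χbar m)
    (hχbar_min : ∀ χ' : Fin M → ℝ, (∀ m, 0 ≤ χ' m) →
      (∀ m, (∑ i, x i m * ρ ((ℓ i + ∑ m', x i m' * h χ' m') / (c i).toReal)) / (n : ℝ) = χ' m) →
      ∀ m, χbar m ≤ χ' m)
    (χhat : Fin M → ℝ) (hχhat_nonneg : ∀ m, 0 ≤ χhat m)
    (hχhat_sol : ∀ m,
      (∑ i, x i m * ρc ((ℓ i + ∑ m', x i m' * h χhat m') / (c i).toReal)) / (n : ℝ) = χhat m)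
    (hχhat_min : ∀ χ' : Fin M → ℝ, (∀ m, 0 ≤ χ' m) →
      (∀ m, (∑ i, x i m * ρc ((ℓ i + ∑ m', x i m' * h χ' m') / (c i).toReal)) / (n : ℝ) = χ' m) →
      ∀ m, χhat m ≤ χ' m)
    (χn : Fin M → ℝ)
    (hχn : ∀ m, Tendsto (fun k => sigmaIter ρ h n x c ℓ k m / (n : ℝ)) atTop (𝓝 (χn m))) :
    ∀ m, χhat m ≤ χn m ∧ χn m ≤ χbar m := by

  have hnpos : (0:ℝ) < (n:ℝ) := Nat.cast_pos.mpr hn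
  -- ### Basic facts about ρc
  have hIoo1 : Set.Ioo (0:ℝ) 1 ∈ 𝓝[>] (0:ℝ) :=
    Ioo_mem_nhdsGT_of_mem ⟨le_refl 0, one_pos⟩
  have hρc_le : ∀ u : ℝ, 0 ≤ u → ρc u ≤ ρ u := by
    intro u hu
    refine le_of_tendsto (hρc u hu) ?_
    filter_upwards [hIoo1] with ε hε
    exact hρ_mono (Set.mem_Ici.2 (by nlinarith [hε.1, hε.2])) hu
      (by nlinarith [hε.1, hε.2])
  have hρ_lt_le : ∀ w u : ℝ, 0 ≤ w → w < u → ρ w ≤ ρc u := by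
    intro w u hw hwu
    have hu : 0 < u := lt_of_le_of_lt hw hwu
    refine ge_of_tendsto (hρc u hu.le) ?_
    have hpos : (0:ℝ) < (u - w) / u := div_pos (by linarith) hu
    filter_upwards [Ioo_mem_nhdsGT_of_mem ⟨le_refl 0, hpos⟩] with ε hε
    have h1 : ε * u < u - w := by
      have := (lt_div_iff₀ hu).mp hε.2
      nlinarith
    have hw1u : w ≤ (1-ε)*u := by nlinarith
    exact hρ_mono (Set.mem_Ici.2 hw) (Set.mem_Ici.2 (le_trans hw hw1u)) hw1u
  have hρc_mono : ∀ u v : ℝ, 0 ≤ u → u ≤ v → ρc u ≤ ρc v := by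
    intro u v hu huv
    rcases eq_or_lt_of_le huv with rfl | hlt
    · exact le_refl _
    · exact le_trans (hρc_le u hu) (hρ_lt_le u v hu hlt)
  have hρc_nonneg : ∀ u : ℝ, 0 ≤ u → 0 ≤ ρc u := by
    intro u hu
    refine ge_of_tendsto (hρc u hu) ?_
    filter_upwards [hIoo1] with ε hε
    exact (hρ_mem _ (Set.mem_Ici.2 (by nlinarith [hε.1, hε.2]))).1
  -- left-continuity of ρc along monotone sequences
  have hρc_seq : ∀ (a : ℕ → ℝ) (A : ℝ), Monotone a → (∀ k, 0 ≤ a k) →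
      Tendsto a atTop (𝓝 A) → Tendsto (fun k => ρc (a k)) atTop (𝓝 (ρc A)) := by
    intro a A ha ha0 hA
    have haA : ∀ k, a k ≤ A := ha.ge_of_tendsto hA
    have hmono : Monotone fun k => ρc (a k) := fun i j hij =>
      hρc_mono _ _ (ha0 i) (ha hij)
    have hbdd : BddAbove (Set.range fun k => ρc (a k)) := by
      refine ⟨ρc A, ?_⟩
      rintro _ ⟨k, rfl⟩
      exact hρc_mono _ _ (ha0 k) (haA k)
    have htend := tendsto_atTop_ciSup hmono hbdd
    have heq : (⨆ k, ρc (a k)) = ρc A := by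
      refine le_antisymm (ciSup_le fun k => hρc_mono _ _ (ha0 k) (haA k)) ?_
      have hA0 : 0 ≤ A := le_trans (ha0 0) (haA 0)
      rcases eq_or_lt_of_le hA0 with rfl | hApos
      · have h00 : a 0 = 0 := le_antisymm (haA 0) (ha0 0)
        calc ρc 0 = ρc (a 0) := by rw [h00]
          _ ≤ ⨆ k, ρc (a k) := le_ciSup hbdd 0
      · refine le_of_tendsto (hρc A hA0) ?_
        filter_upwards [hIoo1] with ε hε
        have hlt : (1-ε)*A < A := by nlinarith [hε.1, hε.2]
        obtain ⟨k, hk⟩ := (hA.eventually (eventually_gt_nhds hlt)).exists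
        calc ρ ((1-ε)*A) ≤ ρc (a k) :=
              hρ_lt_le _ _ (by nlinarith [hε.1, hε.2]) hk
          _ ≤ ⨆ k, ρc (a k) := le_ciSup hbdd k
    rwa [heq] at htend
  -- ### Facts about the argument of ρ in the iteration
  have harg_nonneg : ∀ χ : Fin M → ℝ, (∀ m', 0 ≤ χ m') → ∀ i : Fin n,
      0 ≤ (ℓ i + ∑ m', x i m' * h χ m') / (c i).toReal := by
    intro χ hχ i
    exact div_nonneg (add_nonneg (hℓ i) (Finset.sum_nonneg fun m' _ =>
      mul_nonneg (hx i m') (hh_mem m' χ hχ).1)) ENNReal.toReal_nonneg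
  have harg_mono : ∀ χ χ' : Fin M → ℝ, (∀ m', 0 ≤ χ m') → (∀ m', χ m' ≤ χ' m') →
      ∀ i : Fin n,
      (ℓ i + ∑ m', x i m' * h χ m') / (c i).toReal ≤
      (ℓ i + ∑ m', x i m' * h χ' m') / (c i).toReal := by
    intro χ χ' hχ hle i
    rw [div_eq_mul_inv, div_eq_mul_inv]
    refine mul_le_mul_of_nonneg_right ?_ (by positivity)
    exact add_le_add le_rfl (Finset.sum_le_sum fun m' _ =>
      mul_le_mul_of_nonneg_left (hh_mono m' χ χ' hχ hle) (hx i m'))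
  -- unfolding lemmas for the normalized iterates
  have hτ_succ : ∀ (ρ' : ℝ → ℝ) (k : ℕ) (m : Fin M),
      sigmaIter ρ' h n x c ℓ (k+1) m / (n:ℝ) =
      (∑ i, x i m * ρ' ((ℓ i + ∑ m', x i m' *
        h (fun m'' => sigmaIter ρ' h n x c ℓ k m'' / (n:ℝ)) m') / (c i).toReal)) / (n:ℝ) := by
    intro ρ' k m
    rfl
  have hτ0 : ∀ (ρ' : ℝ → ℝ) (m : Fin M), sigmaIter ρ' h n x c ℓ 0 m / (n:ℝ) = 0 := by
    intro ρ' m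
    show (0:ℝ) / (n:ℝ) = 0
    simp
  -- nonnegativity of iterates
  have hτ_nonneg : ∀ (ρ' : ℝ → ℝ), (∀ u : ℝ, 0 ≤ u → 0 ≤ ρ' u) →
      ∀ k m, 0 ≤ sigmaIter ρ' h n x c ℓ k m / (n:ℝ) := by
    intro ρ' hρ'0 k
    induction k with
    | zero => intro m; rw [hτ0]
    | succ k ih =>
      intro m
      rw [hτ_succ]
      exact div_nonneg (Finset.sum_nonneg fun i _ => mul_nonneg (hx i m)
        (hρ'0 _ (harg_nonneg _ ih i))) (Nat.cast_nonneg n)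
  -- one step of the iteration is monotone in the input
  have hstep_mono : ∀ (ρ' : ℝ → ℝ), (∀ u v : ℝ, 0 ≤ u → u ≤ v → ρ' u ≤ ρ' v) →
      ∀ χ χ' : Fin M → ℝ, (∀ m', 0 ≤ χ m') → (∀ m', χ m' ≤ χ' m') → ∀ m,
      (∑ i, x i m * ρ' ((ℓ i + ∑ m', x i m' * h χ m') / (c i).toReal)) / (n:ℝ) ≤
      (∑ i, x i m * ρ' ((ℓ i + ∑ m', x i m' * h χ' m') / (c i).toReal)) / (n:ℝ) := by
    intro ρ' hρ'm χ χ' hχ hle m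
    gcongr with i _
    · exact hx i m
    · exact hρ'm _ _ (harg_nonneg χ hχ i) (harg_mono χ χ' hχ hle i)
  -- iterates are monotone in k
  have hτ_mono : ∀ (ρ' : ℝ → ℝ), (∀ u : ℝ, 0 ≤ u → 0 ≤ ρ' u) →
      (∀ u v : ℝ, 0 ≤ u → u ≤ v → ρ' u ≤ ρ' v) →
      ∀ k m, sigmaIter ρ' h n x c ℓ k m / (n:ℝ) ≤ sigmaIter ρ' h n x c ℓ (k+1) m / (n:ℝ) := by
    intro ρ' hρ'0 hρ'm k
    induction k with
    | zero => intro m; rw [hτ0]; exact hτ_nonneg ρ' hρ'0 1 m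
    | succ k ih =>
      intro m
      rw [hτ_succ, hτ_succ]
      exact hstep_mono ρ' hρ'm _ _ (hτ_nonneg ρ' hρ'0 k) ih m
  have hρ_mono' : ∀ u v : ℝ, 0 ≤ u → u ≤ v → ρ u ≤ ρ v := fun u v hu huv =>
    hρ_mono (Set.mem_Ici.2 hu) (Set.mem_Ici.2 (le_trans hu huv)) huv
  have hρ_nonneg' : ∀ u : ℝ, 0 ≤ u → 0 ≤ ρ u := fun u hu => (hρ_mem u hu).1
  -- ### Upper bound: the ρ-iterates stay below χbar
  have hτρ_le_χbar : ∀ k m, sigmaIter ρ h n x c ℓ k m / (n:ℝ) ≤ χbar m := by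
    intro k
    induction k with
    | zero => intro m; rw [hτ0]; exact hχbar_nonneg m
    | succ k ih =>
      intro m
      rw [hτ_succ]
      calc (∑ i, x i m * ρ ((ℓ i + ∑ m', x i m' *
              h (fun m'' => sigmaIter ρ h n x c ℓ k m'' / (n:ℝ)) m') / (c i).toReal)) / (n:ℝ)
          ≤ (∑ i, x i m * ρ ((ℓ i + ∑ m', x i m' * h χbar m') / (c i).toReal)) / (n:ℝ) :=
            hstep_mono ρ hρ_mono' _ _ (hτ_nonneg ρ hρ_nonneg' k) ih m
        _ = χbar m := hχbar_sol m
  have hupper : ∀ m, χn m ≤ χbar m := fun m =>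
    le_of_tendsto (hχn m) (Filter.Eventually.of_forall fun k => hτρ_le_χbar k m)
  -- ### Lower bound via the ρc-iteration
  have hτc_le_τ : ∀ k m, sigmaIter ρc h n x c ℓ k m / (n:ℝ) ≤
      sigmaIter ρ h n x c ℓ k m / (n:ℝ) := by
    intro k
    induction k with
    | zero => intro m; rw [hτ0, hτ0]
    | succ k ih =>
      intro m
      rw [hτ_succ, hτ_succ]
      calc (∑ i, x i m * ρc ((ℓ i + ∑ m', x i m' *
              h (fun m'' => sigmaIter ρc h n x c ℓ k m'' / (n:ℝ)) m') / (c i).toReal)) / (n:ℝ)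
          ≤ (∑ i, x i m * ρc ((ℓ i + ∑ m', x i m' *
              h (fun m'' => sigmaIter ρ h n x c ℓ k m'' / (n:ℝ)) m') / (c i).toReal)) / (n:ℝ) :=
            hstep_mono ρc hρc_mono _ _ (hτ_nonneg ρc hρc_nonneg k) ih m
        _ ≤ (∑ i, x i m * ρ ((ℓ i + ∑ m', x i m' *
              h (fun m'' => sigmaIter ρ h n x c ℓ k m'' / (n:ℝ)) m') / (c i).toReal)) / (n:ℝ) := by
            gcongr with i _
            · exact hx i m
            · exact hρc_le _ (harg_nonneg _ (hτ_nonneg ρ hρ_nonneg' k) i)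
  have hτρ_le_χn : ∀ k m, sigmaIter ρ h n x c ℓ k m / (n:ℝ) ≤ χn m := by
    intro k m
    have hmono : Monotone fun k => sigmaIter ρ h n x c ℓ k m / (n:ℝ) :=
      monotone_nat_of_le_succ fun k => hτ_mono ρ hρ_nonneg' hρ_mono' k m
    exact hmono.ge_of_tendsto (hχn m) k
  have hτc_le_χn : ∀ k m, sigmaIter ρc h n x c ℓ k m / (n:ℝ) ≤ χn m :=
    fun k m => le_trans (hτc_le_τ k m) (hτρ_le_χn k m)
  -- the limit of the ρc-iteration
  set χ' : Fin M → ℝ := fun m => ⨆ k, sigmaIter ρc h n x c ℓ k m / (n:ℝ) with hχ'def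
  have hbdd : ∀ m, BddAbove (Set.range fun k => sigmaIter ρc h n x c ℓ k m / (n:ℝ)) := by
    intro m
    exact ⟨χn m, by rintro _ ⟨k, rfl⟩; exact hτc_le_χn k m⟩
  have hτc_monoK : ∀ m, Monotone fun k => sigmaIter ρc h n x c ℓ k m / (n:ℝ) := fun m =>
    monotone_nat_of_le_succ fun k => hτ_mono ρc hρc_nonneg hρc_mono k m
  have hτc_tendsto : ∀ m, Tendsto (fun k => sigmaIter ρc h n x c ℓ k m / (n:ℝ))
      atTop (𝓝 (χ' m)) := fun m => tendsto_atTop_ciSup (hτc_monoK m) (hbdd m)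
  have hχ'_nonneg : ∀ m, 0 ≤ χ' m := by
    intro m
    calc (0:ℝ) = sigmaIter ρc h n x c ℓ 0 m / (n:ℝ) := (hτ0 ρc m).symm
      _ ≤ χ' m := le_ciSup (hbdd m) 0
  have hχ'_le_χn : ∀ m, χ' m ≤ χn m := fun m => ciSup_le fun k => hτc_le_χn k m
  -- χ' is a fixed point of the ρc-map
  have hfix : ∀ m,
      (∑ i, x i m * ρc ((ℓ i + ∑ m', x i m' * h χ' m') / (c i).toReal)) / (n:ℝ) = χ' m := by
    intro m
    -- the iterates tend to χ' in the product space, within the nonnegative set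
    have hpi : Tendsto (fun k => fun m'' => sigmaIter ρc h n x c ℓ k m'' / (n:ℝ))
        atTop (𝓝 χ') := tendsto_pi_nhds.2 hτc_tendsto
    have hpiS : Tendsto (fun k => fun m'' => sigmaIter ρc h n x c ℓ k m'' / (n:ℝ))
        atTop (𝓝[{χ : Fin M → ℝ | ∀ m'', 0 ≤ χ m''}] χ') := by
      refine tendsto_nhdsWithin_of_tendsto_nhds_of_eventually_within _ hpi ?_
      exact Filter.Eventually.of_forall fun k => hτ_nonneg ρc hρc_nonneg k
    have hh_tend : ∀ m' : Fin M, Tendsto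
        (fun k => h (fun m'' => sigmaIter ρc h n x c ℓ k m'' / (n:ℝ)) m')
        atTop (𝓝 (h χ' m')) :=
      fun m' => ((hh_cont m' χ' hχ'_nonneg).tendsto).comp hpiS
    have harg_tend : ∀ i : Fin n, Tendsto (fun k =>
        (ℓ i + ∑ m', x i m' * h (fun m'' => sigmaIter ρc h n x c ℓ k m'' / (n:ℝ)) m')
          / (c i).toReal) atTop
        (𝓝 ((ℓ i + ∑ m', x i m' * h χ' m') / (c i).toReal)) := by
      intro i
      exact Tendsto.div_const (Tendsto.const_add _ (tendsto_finset_sum _ fun m' _ =>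
        Tendsto.const_mul _ (hh_tend m'))) _
    have harg_monoK : ∀ i : Fin n, Monotone fun k =>
        (ℓ i + ∑ m', x i m' * h (fun m'' => sigmaIter ρc h n x c ℓ k m'' / (n:ℝ)) m')
          / (c i).toReal := by
      intro i k₁ k₂ hk
      exact harg_mono _ _ (hτ_nonneg ρc hρc_nonneg k₁)
        (fun m'' => hτc_monoK m'' hk) i
    have hargK_nonneg : ∀ i : Fin n, ∀ k, 0 ≤
        (ℓ i + ∑ m', x i m' * h (fun m'' => sigmaIter ρc h n x c ℓ k m'' / (n:ℝ)) m')
          / (c i).toReal :=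
      fun i k => harg_nonneg _ (hτ_nonneg ρc hρc_nonneg k) i
    have hρc_tend : ∀ i : Fin n, Tendsto (fun k => ρc
        ((ℓ i + ∑ m', x i m' * h (fun m'' => sigmaIter ρc h n x c ℓ k m'' / (n:ℝ)) m')
          / (c i).toReal)) atTop
        (𝓝 (ρc ((ℓ i + ∑ m', x i m' * h χ' m') / (c i).toReal))) :=
      fun i => hρc_seq _ _ (harg_monoK i) (hargK_nonneg i) (harg_tend i)
    have hF_tend : Tendsto (fun k => sigmaIter ρc h n x c ℓ (k+1) m / (n:ℝ)) atTop
        (𝓝 ((∑ i, x i m * ρc ((ℓ i + ∑ m', x i m' * h χ' m') / (c i).toReal)) / (n:ℝ))) := by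
      have : Tendsto (fun k => (∑ i, x i m * ρc
          ((ℓ i + ∑ m', x i m' * h (fun m'' => sigmaIter ρc h n x c ℓ k m'' / (n:ℝ)) m')
            / (c i).toReal)) / (n:ℝ)) atTop
          (𝓝 ((∑ i, x i m * ρc ((ℓ i + ∑ m', x i m' * h χ' m') / (c i).toReal)) / (n:ℝ))) :=
        Tendsto.div_const (tendsto_finset_sum _ fun i _ =>
          Tendsto.const_mul _ (hρc_tend i)) _
      exact this.congr fun k => (hτ_succ ρc k m).symm
    have hshift : Tendsto (fun k => sigmaIter ρc h n x c ℓ (k+1) m / (n:ℝ)) atTop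
        (𝓝 (χ' m)) := (hτc_tendsto m).comp (tendsto_add_atTop_nat 1)
    exact tendsto_nhds_unique hF_tend hshift
  have hlower : ∀ m, χhat m ≤ χn m := fun m =>
    le_trans (hχhat_min χ' hχ'_nonneg hfix m) (hχ'_le_χn m)
  exact fun m => ⟨hlower m, hupper m⟩
end
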